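/- arXiv:2508.08675 — 3 statements merged into one kernel-verified Lean document; each statement's English description precedes it below -/
import Mathlib

section
/- The family {Ir({η}) : η ∈ V_k} of subsets of V_k has the finite intersection property; consequently for any finite set {η₁,…,η_m} ⊆ V_k, Ir({η₁,…,η_m}) = ⋂_{i=1}^m Ir({η_i}) is a nonempty subsemigroup of V_k. -/
noncomputable section

abbrev VSym := (ℕ × ℝ) →₀ (ℕ → ℝ)

def VValid (k : ℕ) (g : VSym) : Prop := ∀ p ∈ g.support, 1 ≤ p.1 ∧ p.1 ≤ k

def IrSet (η : VSym) : Set VSym := {y | Disjoint y.support η.support}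

/-- The family {Ir({η}) : η ∈ V_k} has the finite intersection property:
for every finite {η₁,…,η_m} ⊆ V_k, Ir({η₁,…,η_m}) = ⋂ᵢ Ir({ηᵢ}) is a nonempty (within V_k)
subsemigroup of V_k. -/
theorem stmt8 (k : ℕ) (hk : 1 ≤ k) (m : ℕ) (η : Fin m → VSym) (hη : ∀ i, VValid k (η i)) :
    (∃ y : VSym, VValid k y ∧ y ≠ 0 ∧ ∀ i, y ∈ IrSet (η i)) ∧
    (∀ x y : VSym, (∀ i, x ∈ IrSet (η i)) → (∀ i, y ∈ IrSet (η i)) →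
      ∀ i, x + y ∈ IrSet (η i)) := by
  constructor
  · -- pick a real r not appearing as second coordinate in any support
    obtain ⟨r, hr⟩ := Infinite.exists_notMem_finset
      ((Finset.univ.biUnion fun i => (η i).support).image Prod.snd)
    have hone : (fun _ : ℕ => (1:ℝ)) ≠ 0 := by
      intro h
      have := congrFun h 0
      simp at this
    refine ⟨Finsupp.single (1, r) (fun _ => 1), ?_, ?_, ?_⟩
    · intro p hp
      rw [Finsupp.support_single_ne_zero _ hone] at hp
      simp at hp
      subst hp
      exact ⟨le_refl 1, hk⟩
    · intro h
      have : ((Finsupp.single ((1:ℕ), r) (fun _ => (1:ℝ)) : VSym)) (1, r) = 0 := by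
        rw [h]; rfl
      rw [Finsupp.single_eq_same] at this
      exact hone this
    · intro i
      rw [IrSet, Set.mem_setOf_eq, Finsupp.support_single_ne_zero _ hone]
      rw [Finset.disjoint_left]
      intro p hp hp'
      simp at hp
      subst hp
      exact hr (Finset.mem_image.mpr ⟨(1, r), Finset.mem_biUnion.mpr ⟨i, Finset.mem_univ i, hp'⟩, rfl⟩)
  · intro x y hx hy i
    rw [IrSet, Set.mem_setOf_eq]
    exact Finset.disjoint_left.mpr fun p hp hp' => by
      rcases Finset.mem_union.mp (Finsupp.support_add hp) with h | h
      · exact Finset.disjoint_left.mp (hx i) h hp'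
      · exact Finset.disjoint_left.mp (hy i) h hp'
end
end

section
/- Let S be a dense subsemigroup of (0,1) under the partial addition x ∔ y = x + y when x + y ∈ S, which is adequate. Then V_k(0,S) = {η ∈ V_k : π(η) ∈ S}, with η₁ ∔ η₂ = η₁ + η₂ defined when π(η₁ + η₂) ∈ S, is a commutative adequate partial semigroup; in particular, for every η ∈ V_k(0,S), R(η) ⊇ π^{-1}((0, 1−π(η)) ∩ S) ∩ Ir({η}) ≠ ∅. -/
noncomputable section

def piEval (g : VSym) : ℝ :=
  ∑ p ∈ g.support, p.2 * ∏ j ∈ Finset.Icc 1 p.1, g p j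

def onesAt (c : ℝ) : VSym := Finsupp.single (1, c) (fun _ => (1:ℝ))

lemma onesAt_support (c : ℝ) : (onesAt c).support = {((1:ℕ), c)} := by
  apply Finsupp.support_single_ne_zero
  intro h
  have := congrFun h 0
  simp at this

lemma piEval_onesAt (c : ℝ) : piEval (onesAt c) = c := by
  unfold piEval
  rw [onesAt_support]
  simp [onesAt, Finsupp.single_eq_same]

lemma piEval_add_of_disjoint (η ζ : VSym) (h : Disjoint η.support ζ.support) :
    piEval (η + ζ) = piEval η + piEval ζ := by
  unfold piEval
  rw [Finsupp.support_add_eq h, Finset.sum_union h]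
  congr 1
  · apply Finset.sum_congr rfl
    intro p hp
    have hz : ζ p = 0 := Finsupp.notMem_support_iff.mp (Finset.disjoint_left.mp h hp)
    simp [Finsupp.add_apply, hz]
  · apply Finset.sum_congr rfl
    intro p hp
    have hz : η p = 0 := Finsupp.notMem_support_iff.mp (Finset.disjoint_right.mp h hp)
    simp [Finsupp.add_apply, hz]

lemma pick_avoiding (S : Set ℝ)
    (hdense : ∀ a b : ℝ, 0 ≤ a → a < b → b ≤ 1 → ∃ s ∈ S, a < s ∧ s < b)
    (B : Finset ℝ) (b : ℝ) (hb0 : 0 < b) (hb1 : b ≤ 1) :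
    ∃ s ∈ S, 0 < s ∧ s < b ∧ s ∉ B := by
  classical
  set B' := B.filter (fun x => 0 < x ∧ x < b) with hB'
  by_cases hne : B'.Nonempty
  · set m := B'.min' hne with hm
    have hmB' : m ∈ B' := B'.min'_mem hne
    have hm0 : 0 < m := (Finset.mem_filter.mp hmB').2.1
    have hmb : m < b := (Finset.mem_filter.mp hmB').2.2
    obtain ⟨s, hsS, hs0, hsm⟩ := hdense 0 m le_rfl hm0 (le_of_lt (lt_of_lt_of_le hmb hb1))
    refine ⟨s, hsS, hs0, lt_trans hsm hmb, ?_⟩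
    intro hsB
    have : s ∈ B' := Finset.mem_filter.mpr ⟨hsB, hs0, lt_trans hsm hmb⟩
    exact absurd (B'.min'_le s this) (not_le.mpr hsm)
  · obtain ⟨s, hsS, hs0, hsb⟩ := hdense 0 b le_rfl hb0 hb1
    refine ⟨s, hsS, hs0, hsb, ?_⟩
    intro hsB
    exact hne ⟨s, Finset.mem_filter.mpr ⟨hsB, hs0, hsb⟩⟩

lemma VValid_onesAt (k : ℕ) (hk : 1 ≤ k) (c : ℝ) : VValid k (onesAt c) := by
  intro p hp
  rw [onesAt_support, Finset.mem_singleton] at hp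
  subst hp
  exact ⟨le_refl 1, hk⟩

/-- For S a dense subsemigroup of (0,1) under the partial addition (adequate),
V_k(0,S) = {η ∈ V_k : π(η) ∈ S}, with η₁ ∔ η₂ = η₁ + η₂ defined when π(η₁ + η₂) ∈ S, is a
commutative adequate partial semigroup; in particular for every η ∈ V_k(0,S),
R(η) ⊇ π⁻¹((0, 1−π(η)) ∩ S) ∩ Ir({η}) ≠ ∅. -/
theorem stmt12 (k : ℕ) (hk : 1 ≤ k) (S : Set ℝ) (hS : S ⊆ Set.Ioo (0:ℝ) 1)
    (hdense : ∀ a b : ℝ, 0 ≤ a → a < b → b ≤ 1 → ∃ s ∈ S, a < s ∧ s < b)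
    (hclosed : ∀ x ∈ S, ∀ y ∈ S, x + y < 1 → x + y ∈ S) :
    -- commutativity of the partial operation
    (∀ η ζ : VSym, η + ζ = ζ + η) ∧
    -- adequacy: every finite subset of V_k(0,S) has a common right-compatible element
    (∀ H : Finset VSym, (∀ η ∈ H, VValid k η ∧ piEval η ∈ S) →
      ∃ ζ : VSym, VValid k ζ ∧ piEval ζ ∈ S ∧ ∀ η ∈ H, piEval (η + ζ) ∈ S) ∧
    -- in particular: R(η) ⊇ π⁻¹((0,1−π(η)) ∩ S) ∩ Ir({η}) ≠ ∅
    (∀ η : VSym, VValid k η → piEval η ∈ S →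
      ({ζ : VSym | piEval ζ ∈ Set.Ioo 0 (1 - piEval η) ∧ piEval ζ ∈ S ∧ ζ ∈ IrSet η} ⊆
        {ζ : VSym | piEval ζ ∈ S ∧ piEval (η + ζ) ∈ S}) ∧
      {ζ : VSym | VValid k ζ ∧ piEval ζ ∈ Set.Ioo 0 (1 - piEval η) ∧ piEval ζ ∈ S ∧
        ζ ∈ IrSet η}.Nonempty) := by
  classical
  refine ⟨fun η ζ => add_comm η ζ, ?_, ?_⟩
  · -- adequacy
    intro H hH
    set B : Finset ℝ := (H.biUnion fun η => η.support).image Prod.snd with hB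
    set T : Finset ℝ := insert (0:ℝ) (H.image piEval) with hT
    have hTne : T.Nonempty := ⟨0, Finset.mem_insert_self _ _⟩
    set M : ℝ := T.max' hTne with hM
    have hM0 : (0:ℝ) ≤ M := T.le_max' 0 (Finset.mem_insert_self _ _)
    have hM1 : M < 1 := by
      rw [hM, Finset.max'_lt_iff]
      intro x hx
      rcases Finset.mem_insert.mp hx with h0 | h1
      · simp [h0]
      · obtain ⟨η, hηH, rfl⟩ := Finset.mem_image.mp h1
        exact (hS (hH η hηH).2).2
    obtain ⟨s, hsS, hs0, hsb, hsB⟩ :=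
      pick_avoiding S hdense B (1 - M) (by linarith) (by linarith)
    refine ⟨onesAt s, VValid_onesAt k hk s, by rwa [piEval_onesAt], ?_⟩
    intro η hηH
    have hnot : ((1:ℕ), s) ∉ η.support := by
      intro hmem
      exact hsB (Finset.mem_image.mpr ⟨((1:ℕ), s),
        Finset.mem_biUnion.mpr ⟨η, hηH, hmem⟩, rfl⟩)
    have hdisj : Disjoint η.support (onesAt s).support := by
      rw [onesAt_support, Finset.disjoint_singleton_right]
      exact hnot
    rw [piEval_add_of_disjoint η (onesAt s) hdisj, piEval_onesAt]
    have hηS := (hH η hηH).2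
    have hηM : piEval η ≤ M :=
      T.le_max' _ (Finset.mem_insert_of_mem (Finset.mem_image.mpr ⟨η, hηH, rfl⟩))
    exact hclosed _ hηS _ hsS (by linarith)
  · -- particular part
    intro η hηV hηS
    have hη01 := hS hηS
    constructor
    · intro ζ hζ
      obtain ⟨⟨hζ0, hζlt⟩, hζS, hζIr⟩ := hζ
      have hdisj : Disjoint η.support ζ.support := hζIr.symm
      refine ⟨hζS, ?_⟩
      rw [piEval_add_of_disjoint η ζ hdisj]
      exact hclosed _ hηS _ hζS (by linarith)
    · set B : Finset ℝ := η.support.image Prod.snd with hB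
      obtain ⟨s, hsS, hs0, hsb, hsB⟩ :=
        pick_avoiding S hdense B (1 - piEval η) (by linarith [hη01.2]) (by linarith [hη01.1])
      refine ⟨onesAt s, VValid_onesAt k hk s, ?_, by rwa [piEval_onesAt], ?_⟩
      · rw [piEval_onesAt]; exact ⟨hs0, hsb⟩
      · show Disjoint (onesAt s).support η.support
        rw [onesAt_support, Finset.disjoint_singleton_left]
        intro hmem
        exact hsB (Finset.mem_image.mpr ⟨((1:ℕ), s), hmem, rfl⟩)
end
end

section
/- Let T be an adequate partial semigroup and S ⊆ T an adequate partial subsemigroup that is also an ideal of T. Then δS is a two-sided ideal of δT, and consequently K(δS) = K(δT). -/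
noncomputable section

/-- A partial semigroup on a type α: `defined x y` says x∗y is defined, `mul` totalizes the
operation (with junk values off the domain), and associativity holds in the strong sense. -/
structure PartialSemigroup (α : Type*) where
  defined : α → α → Prop
  mul : α → α → α
  assoc_def : ∀ x y z, (defined x y ∧ defined (mul x y) z) ↔ (defined y z ∧ defined x (mul y z))
  assoc : ∀ x y z, defined x y → defined (mul x y) z → mul (mul x y) z = mul x (mul y z)

namespace PartialSemigroup

variable {α : Type*} (P : PartialSemigroup α)

/-- R_T(x) for the ambient partial semigroup. -/
def RT (x : α) : Set α := {y | P.defined x y}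

/-- R_S(x) for the partial subsemigroup on the subset S (inherited operation). -/
def RSub (S : Set α) (x : α) : Set α := {y | y ∈ S ∧ P.defined x y ∧ P.mul x y ∈ S}

/-- δT: ultrafilters containing every ⋂_{x∈H} R_T(x). -/
def deltaT : Set (Ultrafilter α) :=
  {p | ∀ H : Finset α, {y | ∀ x ∈ H, P.defined x y} ∈ p}

/-- δS for the partial subsemigroup on S. -/
def deltaSub (S : Set α) : Set (Ultrafilter α) :=
  {p | ∀ H : Finset α, ↑H ⊆ S → {y | y ∈ S ∧ ∀ x ∈ H, P.defined x y ∧ P.mul x y ∈ S} ∈ p}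

/-- The ultrafilter product: A ∈ p∗q iff {x : {y : x∗y ∈ A} ∈ q} ∈ p. -/
def uprod (p q : Ultrafilter α) : Ultrafilter α := p.bind fun x => q.map (P.mul x)

/-- Two-sided ideals of D under the ultrafilter product. -/
def idealsIn (D : Set (Ultrafilter α)) : Set (Set (Ultrafilter α)) :=
  {I | I ⊆ D ∧ I.Nonempty ∧ ∀ p ∈ D, ∀ q ∈ I, P.uprod p q ∈ I ∧ P.uprod q p ∈ I}

/-- The smallest two-sided ideal K(D) (intersection of all ideals of D). -/
def K (D : Set (Ultrafilter α)) : Set (Ultrafilter α) := ⋂₀ P.idealsIn D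

end PartialSemigroup

section Aux

variable {α : Type*} (P : PartialSemigroup α)

lemma aux_mem_uprod {p q : Ultrafilter α} {A : Set α} :
    A ∈ P.uprod p q ↔ {x | {y | P.mul x y ∈ A} ∈ q} ∈ p := by
  simp [PartialSemigroup.uprod, Ultrafilter.bind, ← Ultrafilter.mem_coe, Filter.mem_bind',
    Ultrafilter.mem_map]
  rfl

lemma aux_umono {u : Ultrafilter α} {A B : Set α} (h : A ∈ u) (hAB : A ⊆ B) : B ∈ u :=
  Filter.mem_of_superset h hAB

lemma aux_uiff {u : Ultrafilter α} {C A₁ A₂ : Set α} (hC : C ∈ u)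
    (h : ∀ z ∈ C, z ∈ A₁ ↔ z ∈ A₂) : A₁ ∈ u ↔ A₂ ∈ u := by
  constructor <;> intro hA
  · exact aux_umono (Filter.inter_mem hA hC) (fun z hz => (h z hz.2).1 hz.1)
  · exact aux_umono (Filter.inter_mem hA hC) (fun z hz => (h z hz.2).2 hz.1)

/-- Associativity of the ultrafilter product, given that the two right factors are in δT. -/
lemma aux_uprod_assoc {p q r : Ultrafilter α} (hq : q ∈ P.deltaT) (hr : r ∈ P.deltaT) :
    P.uprod (P.uprod p q) r = P.uprod p (P.uprod q r) := by
  apply Ultrafilter.coe_injective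
  apply Filter.ext
  intro A
  simp only [Ultrafilter.mem_coe]
  rw [aux_mem_uprod, aux_mem_uprod, aux_mem_uprod]
  have : {x | {y | P.mul x y ∈ A} ∈ r} =
      fun c => {y | P.mul c y ∈ A} ∈ r := rfl
  have key : ∀ x : α,
      ({b | {y | P.mul (P.mul x b) y ∈ A} ∈ r} ∈ q ↔
       {b | {y | P.mul x (P.mul b y) ∈ A} ∈ r} ∈ q) := by
    intro x
    refine aux_uiff (C := {b | ∀ a ∈ ({x} : Finset α), P.defined a b}) (hq _) ?_
    intro b hb
    have hxb : P.defined x b := hb x (Finset.mem_singleton_self x)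
    simp only [Set.mem_setOf_eq]
    refine aux_uiff (C := {y | ∀ a ∈ ({P.mul x b} : Finset α), P.defined a y}) (hr _) ?_
    intro y hy
    have hxby : P.defined (P.mul x b) y := hy _ (Finset.mem_singleton_self _)
    simp only [Set.mem_setOf_eq, P.assoc x b y hxb hxby]
  constructor <;> intro h
  · refine aux_umono h ?_
    intro x hx
    exact (key x).1 hx
  · refine aux_umono h ?_
    intro x hx
    exact (key x).2 hx

/-- δS ⊆ δT. -/
lemma aux_sub {S : Set α}
    (hsub : ∀ y : α, ∃ H : Finset α, ↑H ⊆ S ∧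
      {z | z ∈ S ∧ ∀ x ∈ H, P.defined x z ∧ P.mul x z ∈ S} ⊆ P.RT y)
    {q : Ultrafilter α} (hq : q ∈ P.deltaSub S) : q ∈ P.deltaT := by
  classical
  intro H
  choose Hx hHxS hHxsub using hsub
  refine aux_umono (hq (H.biUnion Hx) ?_) ?_
  · intro a ha
    simp only [Finset.coe_biUnion, Set.mem_iUnion, Finset.mem_coe] at ha
    obtain ⟨x, _, h⟩ := ha
    exact hHxS x h
  · intro z hz x hxH
    exact hHxsub x ⟨hz.1, fun a haHx => hz.2 a (Finset.mem_biUnion.2 ⟨x, hxH, haHx⟩)⟩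

/-- δS is nonempty. -/
lemma aux_ne {S : Set α}
    (hSadeq : ∀ H : Finset α, ↑H ⊆ S → ∃ y ∈ S, ∀ x ∈ H, P.defined x y ∧ P.mul x y ∈ S) :
    (P.deltaSub S).Nonempty := by
  classical
  set 𝒜 : Set (Set α) := {A | ∃ H : Finset α, ↑H ⊆ S ∧
    A = {y | y ∈ S ∧ ∀ x ∈ H, P.defined x y ∧ P.mul x y ∈ S}} with h𝒜
  have hne : (Filter.generate 𝒜).NeBot := by
    rw [Filter.generate_neBot_iff]
    intro t hts htf
    choose! Ht hHtS hHteq using fun A (hA : A ∈ t) => hts hA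
    obtain ⟨y, hyS, hy⟩ := hSadeq (htf.toFinset.biUnion Ht) (by
      intro a ha
      simp only [Finset.coe_biUnion, Set.mem_iUnion, Finset.mem_coe,
        Set.Finite.mem_toFinset] at ha
      obtain ⟨A, hA, haA⟩ := ha
      exact hHtS A hA haA)
    refine ⟨y, ?_⟩
    intro A hA
    rw [hHteq A hA]
    exact ⟨hyS, fun x hx => hy x (Finset.mem_biUnion.2 ⟨A, htf.mem_toFinset.2 hA, hx⟩)⟩
  obtain ⟨u, hu⟩ := Ultrafilter.exists_le (Filter.generate 𝒜)
  exact ⟨u, fun H hH => hu (Filter.mem_generate_of_mem ⟨H, hH, rfl⟩)⟩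

/-- δS is a two-sided ideal of δT (the closure properties). -/
lemma aux_part1 {S : Set α}
    (hsub : ∀ y : α, ∃ H : Finset α, ↑H ⊆ S ∧
      {z | z ∈ S ∧ ∀ x ∈ H, P.defined x z ∧ P.mul x z ∈ S} ⊆ P.RT y)
    (hideal : ∀ x ∈ S, ∀ y : α,
      (P.defined x y → P.mul x y ∈ S) ∧ (P.defined y x → P.mul y x ∈ S)) :
    ∀ p ∈ P.deltaT, ∀ q ∈ P.deltaSub S,
      P.uprod p q ∈ P.deltaSub S ∧ P.uprod q p ∈ P.deltaSub S := by
  classical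
  intro p hp q hq
  constructor
  · intro H hHS
    rw [aux_mem_uprod]
    refine aux_umono (hp H) ?_
    intro x hx
    obtain ⟨Hx, hHxS, hHxsub⟩ := hsub x
    have hGS : ↑(Hx ∪ H.image (fun a => P.mul a x)) ⊆ S := by
      intro g hg
      simp only [Finset.coe_union, Set.mem_union, Finset.mem_coe, Finset.coe_image,
        Set.mem_image] at hg
      rcases hg with hg | ⟨a, ha, rfl⟩
      · exact hHxS hg
      · exact (hideal a (hHS ha) x).1 (hx a ha)
    refine aux_umono (hq _ hGS) ?_
    intro y hy
    have hxy : P.defined x y :=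
      hHxsub ⟨hy.1, fun a ha => hy.2 a (Finset.mem_union_left _ ha)⟩
    have hmulxyS : P.mul x y ∈ S := (hideal y hy.1 x).2 hxy
    refine ⟨hmulxyS, fun a ha => ?_⟩
    have hax : P.defined a x := hx a ha
    have hg := hy.2 (P.mul a x)
      (Finset.mem_union_right _ (Finset.mem_image.2 ⟨a, ha, rfl⟩))
    have h1 := (P.assoc_def a x y).mp ⟨hax, hg.1⟩
    refine ⟨h1.2, ?_⟩
    rw [← P.assoc a x y hax hg.1]
    exact hg.2
  · intro H hHS
    rw [aux_mem_uprod]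
    refine aux_umono (hq H hHS) ?_
    intro y hy
    refine aux_umono (hp (insert y (H.image (fun a => P.mul a y)))) ?_
    intro z hz
    have hyz : P.defined y z := hz y (Finset.mem_insert_self _ _)
    have hmulyzS : P.mul y z ∈ S := (hideal y hy.1 z).1 hyz
    refine ⟨hmulyzS, fun a ha => ?_⟩
    have hay : P.defined a y := (hy.2 a ha).1
    have hayz : P.defined (P.mul a y) z :=
      hz _ (Finset.mem_insert_of_mem (Finset.mem_image.2 ⟨a, ha, rfl⟩))
    have h1 := (P.assoc_def a y z).mp ⟨hay, hayz⟩
    refine ⟨h1.2, ?_⟩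
    rw [← P.assoc a y z hay hayz]
    exact (hideal (P.mul a y) (hy.2 a ha).2 z).1 hayz

end Aux

/-- If T is an adequate partial semigroup and S ⊆ T an adequate partial
subsemigroup that is an ideal of T, then δS is a two-sided ideal of δT, and
K(δS) = K(δT). -/
theorem stmt14 {α : Type*} (P : PartialSemigroup α) (S : Set α)
    (hTadeq : ∀ H : Finset α, ∃ y, ∀ x ∈ H, P.defined x y)
    (hSadeq : ∀ H : Finset α, ↑H ⊆ S → ∃ y ∈ S, ∀ x ∈ H, P.defined x y ∧ P.mul x y ∈ S)
    (hsub : ∀ y : α, ∃ H : Finset α, ↑H ⊆ S ∧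
      {z | z ∈ S ∧ ∀ x ∈ H, P.defined x z ∧ P.mul x z ∈ S} ⊆ P.RT y)
    (hideal : ∀ x ∈ S, ∀ y : α,
      (P.defined x y → P.mul x y ∈ S) ∧ (P.defined y x → P.mul y x ∈ S)) :
    (∀ p ∈ P.deltaT, ∀ q ∈ P.deltaSub S,
      P.uprod p q ∈ P.deltaSub S ∧ P.uprod q p ∈ P.deltaSub S) ∧
    P.K (P.deltaSub S) = P.K P.deltaT := by
  have h1 := aux_part1 P hsub hideal
  have hST : P.deltaSub S ⊆ P.deltaT := fun q hq => aux_sub P hsub hq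
  obtain ⟨s₀, hs₀⟩ := aux_ne P hSadeq
  refine ⟨h1, ?_⟩
  apply Set.Subset.antisymm
  · -- K(δS) ⊆ K(δT)
    intro r hr
    apply Set.mem_sInter.2
    intro J hJ
    obtain ⟨hJT, ⟨q₀, hq₀⟩, hJid⟩ := hJ
    have hJS : J ∩ P.deltaSub S ∈ P.idealsIn (P.deltaSub S) := by
      refine ⟨Set.inter_subset_right, ⟨P.uprod q₀ s₀,
        (hJid s₀ (hST hs₀) q₀ hq₀).2, (h1 q₀ (hJT hq₀) s₀ hs₀).1⟩, ?_⟩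
      intro p hp q hq
      exact ⟨⟨(hJid p (hST hp) q hq.1).1, (h1 p (hST hp) q hq.2).1⟩,
        ⟨(hJid p (hST hp) q hq.1).2, (h1 p (hST hp) q hq.2).2⟩⟩
    exact (Set.mem_sInter.1 hr _ hJS).1
  · -- K(δT) ⊆ K(δS)
    intro r hr
    apply Set.mem_sInter.2
    intro I hI
    obtain ⟨hIS, ⟨x₀, hx₀⟩, hIid⟩ := hI
    set J : Set (Ultrafilter α) :=
      {r | ∃ a ∈ P.deltaSub S, ∃ x ∈ I, ∃ b ∈ P.deltaSub S,
        r = P.uprod a (P.uprod x b)} with hJdef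
    have hJsubI : J ⊆ I := by
      rintro _ ⟨a, ha, x, hx, b, hb, rfl⟩
      exact (hIid a ha _ ((hIid b hb x hx).2)).1
    have hJT : J ∈ P.idealsIn P.deltaT := by
      refine ⟨fun r hrJ => hST (hIS (hJsubI hrJ)),
        ⟨P.uprod s₀ (P.uprod x₀ s₀), ⟨s₀, hs₀, x₀, hx₀, s₀, hs₀, rfl⟩⟩, ?_⟩
      rintro p hp _ ⟨a, ha, x, hx, b, hb, rfl⟩
      have hxbT : P.uprod x b ∈ P.deltaT := hST (hIS ((hIid b hb x hx).2))
      constructor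
      · rw [← aux_uprod_assoc P (hST ha) hxbT]
        exact ⟨P.uprod p a, (h1 p hp a ha).1, x, hx, b, hb, rfl⟩
      · rw [aux_uprod_assoc P hxbT hp, aux_uprod_assoc P (hST hb) hp]
        exact ⟨a, ha, x, hx, P.uprod b p, (h1 p hp b hb).2, rfl⟩
    exact hJsubI (Set.mem_sInter.1 hr _ hJT)
end
end
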